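/- Let C be an n × n × r partial latin box (r ≤ n) in which exactly the cells (i, j, k) with i, j ∈ (n−s) + [s] and k ∈ [r] are empty, for some s ≤ n. Suppose that for each fixed k ∈ [r], the set of symbols occurring in line (i, ·, k) equals a common set V_k for every i ∈ (n−s)+[s], and likewise the set of symbols in line (·, j, k) equals V_k for every j ∈ (n−s)+[s]; and suppose each symbol of [n] occurs at least r − s times in the layer (n−s+1, ·, ·). Then C can be completed to an n × n × r latin box. -/

import Mathlib

/-- A partial latin box: each symbol occurs at most once in every line
among the filled cells. -/
def IsPartialLatinBox {r s t n : ℕ}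
    (C : Fin r → Fin s → Fin t → Option (Fin n)) : Prop :=
  (∀ i j k₁ k₂ x, C i j k₁ = some x → C i j k₂ = some x → k₁ = k₂) ∧
  (∀ i j₁ j₂ k x, C i j₁ k = some x → C i j₂ k = some x → j₁ = j₂) ∧
  (∀ i₁ i₂ j k x, C i₁ j k = some x → C i₂ j k = some x → i₁ = i₂)

/-- A latin box: each symbol occurs at most once in every line. -/
def IsLatinBox {r s t n : ℕ} (D : Fin r → Fin s → Fin t → Fin n) : Prop :=
  (∀ i j, Function.Injective fun k => D i j k) ∧
  (∀ i k, Function.Injective fun j => D i j k) ∧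
  (∀ j k, Function.Injective fun i => D i j k)

section
open Finset

/-- split off a subfunction with given sum -/
lemma exists_le_sum_eq {α : Type*} [Fintype α] [DecidableEq α] (c : α → ℕ) :
    ∀ (m : ℕ), m ≤ ∑ x, c x →
    ∃ c₁ : α → ℕ, (∀ x, c₁ x ≤ c x) ∧ ∑ x, c₁ x = m := by
  intro m
  induction m with
  | zero => intro _; exact ⟨fun _ => 0, fun _ => Nat.zero_le _, by simp⟩
  | succ m ih =>
    intro hm
    obtain ⟨c₁, hle, hsum⟩ := ih (by omega)
    have hlt : ∑ x, c₁ x < ∑ x, c x := by omega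
    obtain ⟨x, hx⟩ : ∃ x, c₁ x < c x := by
      by_contra h
      push_neg at h
      have : ∑ x, c x ≤ ∑ x, c₁ x := Finset.sum_le_sum fun y _ => h y
      omega
    refine ⟨fun y => c₁ y + if y = x then 1 else 0, fun y => ?_, ?_⟩
    · have := hle y
      by_cases h : y = x <;> simp [h] <;> omega
    · rw [Finset.sum_add_distrib, hsum, Finset.sum_ite_eq' _ x (fun _ => 1)]
      simp

/-- chop a multiset of total size q*s into q parts of size s -/
lemma chop {α : Type*} [Fintype α] [DecidableEq α] (s : ℕ) :
    ∀ (q : ℕ) (c : α → ℕ), (∑ x, c x) = q * s →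
    ∃ E : Fin q → α → ℕ, (∀ i, ∑ x, E i x = s) ∧ (∀ x, ∑ i, E i x = c x) := by
  intro q
  induction q with
  | zero =>
    intro c hc
    refine ⟨fun i => absurd i.2 (by omega), fun i => absurd i.2 (by omega), fun x => ?_⟩
    simp only [Finset.univ_eq_empty, Finset.sum_empty]
    have : c x ≤ ∑ y, c y := Finset.single_le_sum (fun _ _ => Nat.zero_le _) (mem_univ x)
    omega
  | succ q ih =>
    intro c hc
    obtain ⟨c₁, hle, hsum⟩ := exists_le_sum_eq c s (by nlinarith)
    obtain ⟨E', hrow, hcol⟩ := ih (fun x => c x - c₁ x) (by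
      show ∑ x, (c x - c₁ x) = q * s
      have : ∑ x, (c x - c₁ x) + ∑ x, c₁ x = ∑ x, c x := by
        rw [← Finset.sum_add_distrib]
        exact Finset.sum_congr rfl fun x _ => by have := hle x; omega
      have hq : (q + 1) * s = q * s + s := by ring
      omega)
    refine ⟨Fin.cases c₁ E', fun i => ?_, fun x => ?_⟩
    · induction i using Fin.cases with
      | zero => simpa using hsum
      | succ i => simpa using hrow i
    · rw [Fin.sum_univ_succ]
      simp only [Fin.cases_zero, Fin.cases_succ]
      rw [hcol x]
      have := hle x; omega

/-- Extract a "perfect matching" from a regular bipartite multigraph. -/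
lemma hall_step {ι β : Type*} [Fintype ι] [Fintype β] [DecidableEq ι] [DecidableEq β]
    (M : ι → β → ℕ) (d : ℕ) (hd : 0 < d)
    (hrow : ∀ i, ∑ x, M i x = d) (hcol : ∀ x, ∑ i, M i x = d) :
    ∃ f : ι → β, Function.Injective f ∧ ∀ i, 0 < M i (f i) := by
  have key := (Finset.all_card_le_biUnion_card_iff_exists_injective
      (fun i : ι => univ.filter (fun x => 0 < M i x))).mp ?_
  · obtain ⟨f, hinj, hf⟩ := key
    exact ⟨f, hinj, fun i => (Finset.mem_filter.mp (hf i)).2⟩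
  · intro S
    set T := S.biUnion (fun i => univ.filter (fun x => 0 < M i x)) with hT
    have hmem : ∀ i ∈ S, ∀ x, 0 < M i x → x ∈ T := by
      intro i hi x hx
      exact Finset.mem_biUnion.mpr ⟨i, hi, Finset.mem_filter.mpr ⟨mem_univ x, hx⟩⟩
    have h1 : ∑ i ∈ S, ∑ x ∈ T, M i x = d * S.card := by
      rw [show d * S.card = ∑ _i ∈ S, d by rw [Finset.sum_const]; ring]
      refine Finset.sum_congr rfl fun i hi => ?_
      rw [← hrow i]
      exact Finset.sum_subset (Finset.subset_univ T)
        (fun x _ hx => by by_contra h; exact hx (hmem i hi x (Nat.pos_of_ne_zero h)))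
    have h2 : ∑ i ∈ S, ∑ x ∈ T, M i x ≤ d * T.card := by
      rw [Finset.sum_comm]
      calc ∑ x ∈ T, ∑ i ∈ S, M i x ≤ ∑ x ∈ T, ∑ i, M i x := by
            refine Finset.sum_le_sum fun x _ => ?_
            exact Finset.sum_le_sum_of_subset (Finset.subset_univ S)
        _ = d * T.card := by
            rw [show d * T.card = ∑ _x ∈ T, d by rw [Finset.sum_const]; ring]
            exact Finset.sum_congr rfl fun x _ => hcol x
    exact Nat.le_of_mul_le_mul_left (by omega) hd

/-- Decompose a d-regular bipartite multigraph into d perfect matchings. -/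
lemma decompose {ι β : Type*} [Fintype ι] [Fintype β] [DecidableEq ι] [DecidableEq β]
    (hcard : Fintype.card ι = Fintype.card β) :
    ∀ (d : ℕ) (M : ι → β → ℕ), (∀ i, ∑ x, M i x = d) → (∀ x, ∑ i, M i x = d) →
    ∃ F : Fin d → ι → β, (∀ t, Function.Bijective (F t)) ∧
      ∀ i x, M i x = (univ.filter fun t => F t i = x).card := by
  intro d
  induction d with
  | zero =>
    intro M hrow _
    refine ⟨fun t => absurd t.2 (by omega), fun t => absurd t.2 (by omega), fun i x => ?_⟩
    have h1 : M i x ≤ ∑ y, M i y :=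
      Finset.single_le_sum (fun _ _ => Nat.zero_le _) (mem_univ x)
    rw [hrow i] at h1
    simp [Nat.le_zero.mp h1]
  | succ d ih =>
    intro M hrow hcol
    obtain ⟨f, hinj, hf⟩ := hall_step M (d + 1) (Nat.succ_pos d) hrow hcol
    have hbij : Function.Bijective f :=
      (Fintype.bijective_iff_injective_and_card f).mpr ⟨hinj, hcard⟩
    set M' : ι → β → ℕ := fun i x => M i x - (if f i = x then 1 else 0) with hM'
    have hMsplit : ∀ i x, M i x = M' i x + (if f i = x then 1 else 0) := by
      intro i x
      by_cases h : f i = x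
      · have := hf i; rw [← h] at *; simp [hM', h]; omega
      · simp [hM', h]
    have hrow' : ∀ i, ∑ x, M' i x = d := by
      intro i
      have : ∑ x, M i x = ∑ x, M' i x + ∑ x, (if f i = x then 1 else 0) := by
        rw [← Finset.sum_add_distrib]
        exact Finset.sum_congr rfl fun x _ => hMsplit i x
      rw [hrow i] at this
      rw [Finset.sum_ite_eq _ (f i) (fun _ => 1)] at this
      simp at this
      omega
    have hcol' : ∀ x, ∑ i, M' i x = d := by
      intro x
      have h1 : ∑ i, M i x = ∑ i, M' i x + ∑ i, (if f i = x then 1 else 0) := by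
        rw [← Finset.sum_add_distrib]
        exact Finset.sum_congr rfl fun i _ => hMsplit i x
      rw [hcol x] at h1
      obtain ⟨i₀, hi₀⟩ := hbij.2 x
      have h2 : ∑ i, (if f i = x then 1 else 0) = 1 := by
        rw [← Finset.card_filter]
        have : (univ.filter fun i => f i = x) = {i₀} := by
          ext i
          simp only [Finset.mem_filter, mem_univ, true_and, Finset.mem_singleton]
          exact ⟨fun h => hinj (h.trans hi₀.symm), fun h => h ▸ hi₀⟩
        rw [this, Finset.card_singleton]
      omega
    obtain ⟨F', hFbij, hFcount⟩ := ih M' hrow' hcol'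
    refine ⟨Fin.cases f F', fun t => ?_, fun i x => ?_⟩
    · induction t using Fin.cases with
      | zero => simpa using hbij
      | succ t => simpa using hFbij t
    · rw [Finset.card_filter]
      rw [Fin.sum_univ_succ]
      simp only [Fin.cases_zero, Fin.cases_succ]
      show M i x = (if f i = x then 1 else 0) + ∑ t : Fin d, (if F' t i = x then 1 else 0)
      rw [← Finset.card_filter, ← hFcount i x]
      have := hMsplit i x
      by_cases h : f i = x <;> simp [h] at this ⊢ <;> omega



/-- completing the corner channel of an n × n × r partial latin box. -/
theorem right_corner_channel (n r s : ℕ) (hr : r ≤ n) (hs : s ≤ n) (hs0 : 0 < s)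
    (C : Fin n → Fin n → Fin r → Option (Fin n))
    (hC : IsPartialLatinBox C)
    (hempty : ∀ (i j : Fin n) (k : Fin r),
      C i j k = none ↔ (n - s ≤ (i : ℕ) ∧ n - s ≤ (j : ℕ)))
    (V : Fin r → Set (Fin n))
    (hVrow : ∀ (k : Fin r) (i : Fin n), n - s ≤ (i : ℕ) →
      {x : Fin n | ∃ j, C i j k = some x} = V k)
    (hVcol : ∀ (k : Fin r) (j : Fin n), n - s ≤ (j : ℕ) →
      {x : Fin n | ∃ i, C i j k = some x} = V k)
    (i₀ : Fin n) (hi₀ : (i₀ : ℕ) = n - s)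
    (hcount : ∀ x : Fin n,
      r - s ≤ (Finset.univ.filter fun p : Fin n × Fin r => C i₀ p.1 p.2 = some x).card) :
    ∃ D : Fin n → Fin n → Fin r → Fin n, IsLatinBox D ∧
      ∀ i j k x, C i j k = some x → D i j k = x := by
  classical
  obtain ⟨hCk, hCj, hCi⟩ := hC
  set m0 := n - s with hm0
  have hn0 : 0 < n := lt_of_lt_of_le hs0 hs
  have hm0n : m0 < n := by omega
  have hfill : ∀ (i j : Fin n) (k : Fin r), ¬(m0 ≤ (i:ℕ) ∧ m0 ≤ (j:ℕ)) →
      ∃ y, C i j k = some y := by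
    intro i j k h
    rcases hcn : C i j k with _ | y
    · exact absurd ((hempty i j k).mp hcn) h
    · exact ⟨y, rfl⟩
  set Vf : Fin r → Finset (Fin n) :=
    fun k => univ.filter fun x => ∃ j, C i₀ j k = some x with hVf
  have hi₀m : m0 ≤ (i₀ : ℕ) := le_of_eq hi₀.symm
  have hVfmem : ∀ (k : Fin r) (x : Fin n), x ∈ Vf k ↔ ∃ j, C i₀ j k = some x := by
    intro k x
    simp [hVf]
  have hVmem : ∀ (k : Fin r) (x : Fin n), x ∈ Vf k ↔ x ∈ V k := by
    intro k x
    rw [hVfmem]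
    have h1 := hVrow k i₀ hi₀m
    constructor
    · intro hx; rw [← h1]; exact hx
    · intro hx; rw [← h1] at hx; exact hx
  have hrowVf : ∀ (k : Fin r) (i : Fin n), m0 ≤ (i:ℕ) → ∀ (j : Fin n) (x : Fin n),
      C i j k = some x → x ∈ Vf k := by
    intro k i hi j x hx
    rw [hVmem, ← hVrow k i hi]
    exact ⟨j, hx⟩
  have hcolVf : ∀ (k : Fin r) (j : Fin n), m0 ≤ (j:ℕ) → ∀ (i : Fin n) (x : Fin n),
      C i j k = some x → x ∈ Vf k := by
    intro k j hj i x hx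
    rw [hVmem, ← hVcol k j hj]
    exact ⟨i, hx⟩
  -- card of Vf
  have hVcard : ∀ k, (Vf k).card = m0 := by
    intro k
    have hJ : (univ.filter fun j : Fin n => (j:ℕ) < m0).card = m0 := by
      have e : (univ.filter fun j : Fin n => (j:ℕ) < m0) = Finset.Iio (⟨m0, hm0n⟩ : Fin n) := by
        ext j; simp [Finset.mem_Iio, Fin.lt_def]
      rw [e, Fin.card_Iio]
    have hfe : ∀ j : Fin n, j ∈ (univ.filter fun j : Fin n => (j:ℕ) < m0) →
        ∃ y, C i₀ j k = some y := by
      intro j hj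
      refine hfill i₀ j k ?_
      have := (Finset.mem_filter.mp hj).2
      omega
    have hb : (univ.filter fun j : Fin n => (j:ℕ) < m0).card = (Vf k).card := by
      refine Finset.card_bij (fun j hj => (hfe j hj).choose) ?_ ?_ ?_
      · intro j hj
        exact (hVfmem k _).mpr ⟨j, (hfe j hj).choose_spec⟩
      · intro j₁ hj₁ j₂ hj₂ heq
        exact hCj i₀ j₁ j₂ k _ ((hfe j₁ hj₁).choose_spec.trans (congrArg some heq))
          (hfe j₂ hj₂).choose_spec
      · intro x hx
        obtain ⟨j, hj⟩ := (hVfmem k x).mp hx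
        have hjlt : (j:ℕ) < m0 := by
          by_contra h
          have hnone : C i₀ j k = none := (hempty i₀ j k).mpr ⟨hi₀m, by omega⟩
          rw [hnone] at hj; cases hj
        have hmem : j ∈ (univ.filter fun j : Fin n => (j:ℕ) < m0) :=
          Finset.mem_filter.mpr ⟨mem_univ j, hjlt⟩
        refine ⟨j, hmem, ?_⟩
        exact Option.some.inj ((hfe j hmem).choose_spec.symm.trans hj)
    omega
  -- degree bounds
  have hdegV : ∀ x : Fin n, r - s ≤ (univ.filter fun k : Fin r => x ∈ Vf k).card := by
    intro x
    refine le_trans (hcount x) (le_of_eq (Finset.card_bij (fun p _ => p.2) ?_ ?_ ?_))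
    · intro p hp
      have := (Finset.mem_filter.mp hp).2
      exact Finset.mem_filter.mpr ⟨mem_univ _, (hVfmem p.2 x).mpr ⟨p.1, this⟩⟩
    · rintro ⟨j₁, k₁⟩ hp₁ ⟨j₂, k₂⟩ hp₂ heq
      simp only at heq
      subst heq
      have h1 := (Finset.mem_filter.mp hp₁).2
      have h2 := (Finset.mem_filter.mp hp₂).2
      have := hCj i₀ j₁ j₂ k₁ x h1 h2
      subst this; rfl
    · intro k hk
      obtain ⟨j, hj⟩ := (hVfmem k x).mp (Finset.mem_filter.mp hk).2
      exact ⟨(j, k), Finset.mem_filter.mpr ⟨mem_univ _, hj⟩, rfl⟩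
  set Wf : Fin r → Finset (Fin n) := fun k => (Vf k)ᶜ with hWf
  have hWcard : ∀ k, (Wf k).card = s := by
    intro k
    rw [hWf]
    simp only [Finset.card_compl, Fintype.card_fin, hVcard]
    omega
  have hdegW : ∀ x : Fin n, (univ.filter fun k : Fin r => x ∈ Wf k).card ≤ s := by
    intro x
    have hsplit := Finset.card_filter_add_card_filter_not
      (s := (univ : Finset (Fin r))) (p := fun k => x ∈ Wf k)
    have e : (univ.filter fun k : Fin r => ¬ x ∈ Wf k)
        = (univ.filter fun k : Fin r => x ∈ Vf k) := by
      apply Finset.filter_congr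
      intro k _
      simp [hWf]
    rw [e] at hsplit
    have h2 := hdegV x
    rw [card_univ, Fintype.card_fin] at hsplit
    omega
  -- the padded regular multigraph
  set degW : Fin n → ℕ := fun x => (univ.filter fun k : Fin r => x ∈ Wf k).card with hdegWdef
  set c : Fin n → ℕ := fun x => s - degW x with hc
  have hdegsum : ∑ x : Fin n, degW x = r * s := by
    have h1 : ∀ x : Fin n, degW x = ∑ k : Fin r, if x ∈ Wf k then 1 else 0 := by
      intro x; rw [hdegWdef]; exact Finset.card_filter _ _
    rw [Finset.sum_congr rfl fun x _ => h1 x, Finset.sum_comm]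
    have h2 : ∀ k : Fin r, (∑ x : Fin n, if x ∈ Wf k then 1 else 0) = s := by
      intro k
      rw [← Finset.card_filter]
      rw [show (univ.filter fun x => x ∈ Wf k) = Wf k from Finset.filter_univ_mem _]
      exact hWcard k
    rw [Finset.sum_congr rfl fun k _ => h2 k, Finset.sum_const, card_univ, Fintype.card_fin,
      smul_eq_mul]
  have hcsum : ∑ x : Fin n, c x = (n - r) * s := by
    have hsplit : ∑ x : Fin n, c x + ∑ x : Fin n, degW x = n * s := by
      rw [← Finset.sum_add_distrib]
      have h1 : ∀ x : Fin n, c x + degW x = s := by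
        intro x
        have hd := hdegW x
        have hdg : degW x = (univ.filter fun k : Fin r => x ∈ Wf k).card := rfl
        have hcx : c x = s - degW x := rfl
        omega
      rw [Finset.sum_congr rfl fun x _ => h1 x, Finset.sum_const, card_univ, Fintype.card_fin,
        smul_eq_mul]
    have h2 : (n - r) * s = n * s - r * s := Nat.sub_mul n r s
    have h3 : r * s ≤ n * s := Nat.mul_le_mul_right s hr
    omega
  obtain ⟨E, hEr, hEc⟩ := chop s (n - r) c hcsum
  set M : (Fin r ⊕ Fin (n - r)) → Fin n → ℕ :=
    Sum.elim (fun k x => if x ∈ Wf k then 1 else 0) E with hM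
  have hMle : ∀ (k : Fin r) (x : Fin n), M (Sum.inl k) x ≤ 1 := by
    intro k x
    simp only [hM, Sum.elim_inl]
    split <;> omega
  have hrowM : ∀ i, ∑ x : Fin n, M i x = s := by
    rintro (k | p)
    · simp only [hM, Sum.elim_inl]
      rw [← Finset.card_filter]
      rw [show (univ.filter fun x => x ∈ Wf k) = Wf k from Finset.filter_univ_mem _]
      exact hWcard k
    · simpa only [hM, Sum.elim_inr] using hEr p
  have hcolM : ∀ x, ∑ i, M i x = s := by
    intro x
    rw [Fintype.sum_sum_type]
    have e1 : ∑ k : Fin r, M (Sum.inl k) x = degW x := by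
      rw [hdegWdef]
      simp only
      rw [Finset.card_filter]
      exact Finset.sum_congr rfl fun k _ => by simp [hM]
    have e2 : ∑ p : Fin (n - r), M (Sum.inr p) x = c x := by
      rw [← hEc x]
      exact Finset.sum_congr rfl fun p _ => by simp [hM]
    rw [e1, e2]
    have hd := hdegW x
    have hdg : degW x = (univ.filter fun k : Fin r => x ∈ Wf k).card := rfl
    have hcx : c x = s - degW x := rfl
    omega
  have hcardι : Fintype.card (Fin r ⊕ Fin (n - r)) = Fintype.card (Fin n) := by
    simp only [Fintype.card_sum, Fintype.card_fin]
    omega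
  obtain ⟨F, hFbij, hFcnt⟩ := decompose hcardι s M hrowM hcolM
  set g : Fin r → Fin s → Fin n := fun k t => F t (Sum.inl k) with hg
  have hgW : ∀ (k : Fin r) (t : Fin s), g k t ∈ Wf k := by
    intro k t
    by_contra h
    have h1 := hFcnt (Sum.inl k) (g k t)
    have h2 : M (Sum.inl k) (g k t) = 0 := by
      simp only [hM, Sum.elim_inl, if_neg h]
    have h3 : 0 < (univ.filter fun t' => F t' (Sum.inl k) = g k t).card :=
      Finset.card_pos.mpr ⟨t, Finset.mem_filter.mpr ⟨mem_univ t, rfl⟩⟩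
    omega
  have hgt : ∀ k : Fin r, Function.Injective (g k) := by
    intro k t₁ t₂ hteq
    by_contra hne
    have h1 := hFcnt (Sum.inl k) (g k t₂)
    have h2 : 1 < (univ.filter fun t' => F t' (Sum.inl k) = g k t₂).card :=
      Finset.one_lt_card.mpr
        ⟨t₁, Finset.mem_filter.mpr ⟨mem_univ t₁, hteq⟩,
         t₂, Finset.mem_filter.mpr ⟨mem_univ t₂, rfl⟩, hne⟩
    have h3 := hMle k (g k t₂)
    omega
  have hgk : ∀ (t : Fin s) (k₁ k₂ : Fin r), g k₁ t = g k₂ t → k₁ = k₂ := by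
    intro t k₁ k₂ h
    exact Sum.inl.inj ((hFbij t).1 h)
  -- modular cancellation
  have hmodb : ∀ a b₁ b₂ : ℕ, b₁ < s → b₂ < s → (a + b₁) % s = (a + b₂) % s → b₁ = b₂ := by
    intro a b₁ b₂ h₁ h₂ h
    exact (Nat.ModEq.add_left_cancel' a h).eq_of_lt_of_lt h₁ h₂
  have hmoda : ∀ a₁ a₂ b : ℕ, a₁ < s → a₂ < s → (a₁ + b) % s = (a₂ + b) % s → a₁ = a₂ := by
    intro a₁ a₂ b h₁ h₂ h
    exact (Nat.ModEq.add_right_cancel' b h).eq_of_lt_of_lt h₁ h₂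
  -- the completed box
  set idx : Fin n → Fin n → Fin s :=
    fun i j => ⟨((i:ℕ) - m0 + ((j:ℕ) - m0)) % s, Nat.mod_lt _ hs0⟩ with hidx
  set D : Fin n → Fin n → Fin r → Fin n :=
    fun i j k => if m0 ≤ (i:ℕ) ∧ m0 ≤ (j:ℕ) then g k (idx i j)
      else (C i j k).getD ⟨0, hn0⟩ with hD
  have hDcorner : ∀ (i j : Fin n) (k : Fin r), m0 ≤ (i:ℕ) → m0 ≤ (j:ℕ) →
      D i j k = g k (idx i j) := by
    intro i j k h1 h2
    simp only [hD, if_pos (And.intro h1 h2)]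
  have hDfill : ∀ (i j : Fin n) (k : Fin r), ¬(m0 ≤ (i:ℕ) ∧ m0 ≤ (j:ℕ)) →
      C i j k = some (D i j k) := by
    intro i j k h
    obtain ⟨y, hy⟩ := hfill i j k h
    rw [hy]
    simp only [hD, if_neg h, hy, Option.getD_some]
  refine ⟨D, ⟨?_, ?_, ?_⟩, ?_⟩
  · -- injective in k
    intro i j k₁ k₂ h
    simp only at h
    by_cases hc' : m0 ≤ (i:ℕ) ∧ m0 ≤ (j:ℕ)
    · rw [hDcorner i j k₁ hc'.1 hc'.2, hDcorner i j k₂ hc'.1 hc'.2] at h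
      exact hgk _ _ _ h
    · exact hCk i j k₁ k₂ (D i j k₂) (h ▸ hDfill i j k₁ hc') (hDfill i j k₂ hc')
  · -- injective in j
    intro i k j₁ j₂ h
    simp only at h
    by_cases h1 : m0 ≤ (i:ℕ) ∧ m0 ≤ (j₁:ℕ) <;> by_cases h2 : m0 ≤ (i:ℕ) ∧ m0 ≤ (j₂:ℕ)
    · rw [hDcorner i j₁ k h1.1 h1.2, hDcorner i j₂ k h2.1 h2.2] at h
      have hi := congrArg Fin.val (hgt k h)
      simp only [hidx] at hi
      have hb₁ : (j₁:ℕ) - m0 < s := by have := j₁.2; omega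
      have hb₂ : (j₂:ℕ) - m0 < s := by have := j₂.2; omega
      have := hmodb ((i:ℕ) - m0) _ _ hb₁ hb₂ hi
      exact Fin.ext (by omega)
    · -- j₁ corner, j₂ filled
      have hx := hDfill i j₂ k h2
      have hv : D i j₂ k ∈ Vf k := hrowVf k i h1.1 j₂ _ hx
      have hw : D i j₁ k ∈ Wf k := by
        rw [hDcorner i j₁ k h1.1 h1.2]; exact hgW k _
      rw [h] at hw
      rw [hWf] at hw
      exact absurd hv (Finset.mem_compl.mp hw)
    · -- j₁ filled, j₂ corner
      have hx := hDfill i j₁ k h1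
      have hv : D i j₁ k ∈ Vf k := hrowVf k i h2.1 j₁ _ hx
      have hw : D i j₂ k ∈ Wf k := by
        rw [hDcorner i j₂ k h2.1 h2.2]; exact hgW k _
      rw [← h] at hw
      rw [hWf] at hw
      exact absurd hv (Finset.mem_compl.mp hw)
    · exact hCj i j₁ j₂ k (D i j₂ k) (h ▸ hDfill i j₁ k h1) (hDfill i j₂ k h2)
  · -- injective in i
    intro j k i₁ i₂ h
    simp only at h
    by_cases h1 : m0 ≤ (i₁:ℕ) ∧ m0 ≤ (j:ℕ) <;> by_cases h2 : m0 ≤ (i₂:ℕ) ∧ m0 ≤ (j:ℕ)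
    · rw [hDcorner i₁ j k h1.1 h1.2, hDcorner i₂ j k h2.1 h2.2] at h
      have hi := congrArg Fin.val (hgt k h)
      simp only [hidx] at hi
      have ha₁ : (i₁:ℕ) - m0 < s := by have := i₁.2; omega
      have ha₂ : (i₂:ℕ) - m0 < s := by have := i₂.2; omega
      have := hmoda _ _ ((j:ℕ) - m0) ha₁ ha₂ hi
      exact Fin.ext (by omega)
    · have hx := hDfill i₂ j k h2
      have hv : D i₂ j k ∈ Vf k := hcolVf k j h1.2 i₂ _ hx
      have hw : D i₁ j k ∈ Wf k := by
        rw [hDcorner i₁ j k h1.1 h1.2]; exact hgW k _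
      rw [h] at hw
      rw [hWf] at hw
      exact absurd hv (Finset.mem_compl.mp hw)
    · have hx := hDfill i₁ j k h1
      have hv : D i₁ j k ∈ Vf k := hcolVf k j h2.2 i₁ _ hx
      have hw : D i₂ j k ∈ Wf k := by
        rw [hDcorner i₂ j k h2.1 h2.2]; exact hgW k _
      rw [← h] at hw
      rw [hWf] at hw
      exact absurd hv (Finset.mem_compl.mp hw)
    · exact hCi i₁ i₂ j k (D i₂ j k) (h ▸ hDfill i₁ j k h1) (hDfill i₂ j k h2)
  · -- extension
    intro i j k x hx
    by_cases h : m0 ≤ (i:ℕ) ∧ m0 ≤ (j:ℕ)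
    · have := (hempty i j k).mpr h
      rw [hx] at this
      cases this
    · have := hDfill i j k h
      rw [hx] at this
      exact (Option.some.inj this).symm

end
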